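/- Let p be an even positive integer, E a finite index set, hₑ : ℝ → ℝ convex functions, and h(x) = ∑ₑ hₑ(xₑ). Let OPT = min over {f : Bᵀf = d} of h(f), achieved at f*. Let f satisfy Bᵀf = d, and let C₁, C₂ > 0 be constants such that for each e there exist rₑ, sₑ ≥ 0 and gₑ ∈ ℝ with C₁(rₑΔ² + sₑΔ^p) ≤ hₑ(fₑ + Δ) − hₑ(fₑ) − gₑΔ ≤ C₂(rₑΔ² + sₑΔ^p) for all Δ ∈ ℝ. If Δ̂ = argmin over {Δ : BᵀΔ = 0} of gᵀΔ + C₁(∑ₑ rₑΔₑ² + ∑ₑ sₑΔₑ^p), then h(f + (C₁/C₂)Δ̂) − OPT ≤ (1 − C₁/C₂)(h(f) − OPT). -/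

import Mathlib

theorem stmt_13 {V E : Type} [Fintype V] [Fintype E]
    (p : ℕ) (hp : Even p) (hp0 : 0 < p)
    (B : Matrix E V ℝ) (d : V → ℝ)
    (he : E → ℝ → ℝ) (hconv : ∀ e, ConvexOn ℝ Set.univ (he e))
    (fstar : E → ℝ) (hfstar : B.transpose.mulVec fstar = d)
    (hopt : ∀ f', B.transpose.mulVec f' = d → (∑ e, he e (fstar e)) ≤ ∑ e, he e (f' e))
    (f : E → ℝ) (hf : B.transpose.mulVec f = d)
    (C₁ C₂ : ℝ) (hC₁ : 0 < C₁) (hC₂ : 0 < C₂)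
    (r s g : E → ℝ) (hr : ∀ e, 0 ≤ r e) (hs : ∀ e, 0 ≤ s e)
    (hbound : ∀ e (Δ : ℝ),
      C₁ * (r e * Δ^2 + s e * Δ^p) ≤ he e (f e + Δ) - (he e (f e) + g e * Δ) ∧
      he e (f e + Δ) - (he e (f e) + g e * Δ) ≤ C₂ * (r e * Δ^2 + s e * Δ^p))
    (Dhat : E → ℝ) (hDhat : B.transpose.mulVec Dhat = 0)
    (hDopt : ∀ Δ : E → ℝ, B.transpose.mulVec Δ = 0 →
      (∑ e, g e * Dhat e) + C₁ * ((∑ e, r e * (Dhat e)^2) + ∑ e, s e * (Dhat e)^p) ≤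
      (∑ e, g e * Δ e) + C₁ * ((∑ e, r e * (Δ e)^2) + ∑ e, s e * (Δ e)^p)) :
    (∑ e, he e (f e + (C₁ / C₂) * Dhat e)) - (∑ e, he e (fstar e)) ≤
      (1 - C₁ / C₂) * ((∑ e, he e (f e)) - ∑ e, he e (fstar e)) := by
  obtain ⟨k, hk⟩ := hp
  have hp2 : 2 ≤ p := by omega
  set lam : ℝ := C₁ / C₂ with hlam
  have hlampos : 0 < lam := div_pos hC₁ hC₂
  -- per-edge upper bound
  have hper : ∀ e, he e (f e + lam * Dhat e) ≤
      he e (f e) + lam * (g e * Dhat e + C₁ * (r e * (Dhat e)^2 + s e * (Dhat e)^p)) := by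
    intro e
    have hb := (hbound e (lam * Dhat e)).2
    by_cases hcc : C₁ ≤ C₂
    · have hlamle1 : lam ≤ 1 := (div_le_one hC₂).2 hcc
      have hpow : lam ^ p ≤ lam ^ 2 := pow_le_pow_of_le_one hlampos.le hlamle1 hp2
      have hDp : (0:ℝ) ≤ (Dhat e) ^ p := Even.pow_nonneg ⟨k, hk⟩ _
      have h1 : (lam * Dhat e)^2 = lam^2 * (Dhat e)^2 := by ring
      have h2 : (lam * Dhat e)^p = lam^p * (Dhat e)^p := mul_pow _ _ _
      have heq : C₂ * lam ^ 2 = lam * C₁ := by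
        field_simp [hlam]
        rw [hlam]; field_simp [hC₂.ne']
      have hkey : C₂ * (s e * ((lam * Dhat e) ^ p)) ≤ lam * (C₁ * (s e * (Dhat e)^p)) := by
        calc C₂ * (s e * ((lam * Dhat e) ^ p)) = C₂ * (s e * (lam ^ p * (Dhat e) ^ p)) := by
              rw [h2]
          _ ≤ C₂ * (s e * (lam ^ 2 * (Dhat e) ^ p)) := by
              apply mul_le_mul_of_nonneg_left _ hC₂.le
              exact mul_le_mul_of_nonneg_left (mul_le_mul_of_nonneg_right hpow hDp) (hs e)
          _ = lam * (C₁ * (s e * (Dhat e)^p)) := by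
              linear_combination (s e * (Dhat e)^p) * heq
      have hkey2 : C₂ * (r e * ((lam * Dhat e) ^ 2)) = lam * (C₁ * (r e * (Dhat e)^2)) := by
        rw [h1]; linear_combination (r e * (Dhat e)^2) * heq
      nlinarith [hb]
    · push_neg at hcc
      have hb1 := (hbound e 1).1
      have hb2 := (hbound e 1).2
      have h12 := le_trans hb1 hb2
      simp only [one_pow, mul_one] at h12
      have hrs : r e + s e ≤ 0 := by
        by_contra hcon
        push_neg at hcon
        nlinarith [mul_pos (sub_pos.mpr hcc) hcon]
      have hre : r e = 0 := le_antisymm (by linarith [hs e]) (hr e)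
      have hse : s e = 0 := le_antisymm (by linarith [hr e]) (hs e)
      rw [hre, hse] at hb ⊢
      simp at hb ⊢
      nlinarith [hb, hlampos]
  -- sum of per-edge bounds
  have hsum : (∑ e, he e (f e + lam * Dhat e)) ≤
      (∑ e, he e (f e)) + lam * ((∑ e, g e * Dhat e) +
        C₁ * ((∑ e, r e * (Dhat e)^2) + ∑ e, s e * (Dhat e)^p)) := by
    calc (∑ e, he e (f e + lam * Dhat e))
        ≤ ∑ e, (he e (f e) + lam * (g e * Dhat e + C₁ * (r e * (Dhat e)^2 + s e * (Dhat e)^p))) :=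
          Finset.sum_le_sum fun e _ => hper e
      _ = (∑ e, he e (f e)) + lam * ((∑ e, g e * Dhat e) +
            C₁ * ((∑ e, r e * (Dhat e)^2) + ∑ e, s e * (Dhat e)^p)) := by
          simp [Finset.sum_add_distrib, Finset.mul_sum, mul_add]
  -- lower bound via f* - f
  have hker : B.transpose.mulVec (fstar - f) = 0 := by
    rw [Matrix.mulVec_sub, hfstar, hf, sub_self]
  have hObj := hDopt (fstar - f) hker
  have hlow : (∑ e, g e * (fstar - f) e) +
      C₁ * ((∑ e, r e * ((fstar - f) e)^2) + ∑ e, s e * ((fstar - f) e)^p) ≤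
      (∑ e, he e (fstar e)) - ∑ e, he e (f e) := by
    have step : ∀ e, g e * (fstar - f) e + C₁ * (r e * ((fstar - f) e)^2 + s e * ((fstar - f) e)^p)
        ≤ he e (fstar e) - he e (f e) := by
      intro e
      have hb := (hbound e (fstar e - f e)).1
      have : f e + (fstar e - f e) = fstar e := by ring
      rw [this] at hb
      simp only [Pi.sub_apply]
      linarith
    calc (∑ e, g e * (fstar - f) e) +
        C₁ * ((∑ e, r e * ((fstar - f) e)^2) + ∑ e, s e * ((fstar - f) e)^p)
        = ∑ e, (g e * (fstar - f) e + C₁ * (r e * ((fstar - f) e)^2 + s e * ((fstar - f) e)^p)) := by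
          simp [Finset.sum_add_distrib, Finset.mul_sum, mul_add]
      _ ≤ ∑ e, (he e (fstar e) - he e (f e)) := Finset.sum_le_sum fun e _ => step e
      _ = (∑ e, he e (fstar e)) - ∑ e, he e (f e) := by rw [Finset.sum_sub_distrib]
  have hObj2 : (∑ e, g e * Dhat e) + C₁ * ((∑ e, r e * (Dhat e)^2) + ∑ e, s e * (Dhat e)^p) ≤
      (∑ e, he e (fstar e)) - ∑ e, he e (f e) := le_trans hObj hlow
  have hmul := mul_le_mul_of_nonneg_left hObj2 hlampos.le
  nlinarith [hsum, hmul]
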